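/- Let Φ_X ∈ R^{n×s}, Φ_Y ∈ R^{m×s} and η > 0. Set Λ = (1/n) Φ_Xᵀ Φ_X − (η/m) Φ_Yᵀ Φ_Y. Then Λ shares the same nonzero eigenvalues with the (n+m)×(n+m) block matrix K = [[K_XX, √η K_XY], [−√η K_XYᵀ, −η K_YY]], where K_XX = (1/n) Φ_X Φ_Xᵀ, K_YY = (1/m) Φ_Y Φ_Yᵀ, and K_XY = (1/√(nm)) Φ_X Φ_Yᵀ. -/

import Mathlib

open Matrix

lemma eig_transfer {α β : Type*} [Fintype α] [Fintype β] [DecidableEq α] [DecidableEq β]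
    (A : Matrix α β ℝ) (B : Matrix β α ℝ) (μ : ℝ) (hμ : μ ≠ 0)
    (h : ∃ v : β → ℝ, v ≠ 0 ∧ (B * A) *ᵥ v = μ • v) :
    ∃ w : α → ℝ, w ≠ 0 ∧ (A * B) *ᵥ w = μ • w := by
  obtain ⟨v, hv, hev⟩ := h
  refine ⟨A *ᵥ v, ?_, ?_⟩
  · intro h0
    apply hv
    have hz : (B * A) *ᵥ v = 0 := by rw [← Matrix.mulVec_mulVec, h0, Matrix.mulVec_zero]
    rw [hz] at hev
    exact (smul_eq_zero.mp hev.symm).resolve_left hμ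
  · calc (A * B) *ᵥ (A *ᵥ v) = A *ᵥ ((B * A) *ᵥ v) := by
          rw [Matrix.mulVec_mulVec, Matrix.mulVec_mulVec, Matrix.mul_assoc]
      _ = μ • (A *ᵥ v) := by rw [hev, Matrix.mulVec_smul]

/-- The differential kernel covariance matrix Λ = (1/n)ΦXᵀΦX − (η/m)ΦYᵀΦY shares
nonzero eigenvalues with the η-differential kernel block matrix. -/
theorem stmt6 {n m s : ℕ} (hn : 0 < n) (hm : 0 < m)
    (ΦX : Matrix (Fin n) (Fin s) ℝ) (ΦY : Matrix (Fin m) (Fin s) ℝ)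
    (η : ℝ) (hη : 0 < η) :
    let Λ : Matrix (Fin s) (Fin s) ℝ :=
      ((n : ℝ)⁻¹) • (ΦXᵀ * ΦX) - (η / m) • (ΦYᵀ * ΦY)
    let KXX : Matrix (Fin n) (Fin n) ℝ := ((n : ℝ)⁻¹) • (ΦX * ΦXᵀ)
    let KYY : Matrix (Fin m) (Fin m) ℝ := ((m : ℝ)⁻¹) • (ΦY * ΦYᵀ)
    let KXY : Matrix (Fin n) (Fin m) ℝ := ((Real.sqrt ((n : ℝ) * m))⁻¹) • (ΦX * ΦYᵀ)
    let K : Matrix (Fin n ⊕ Fin m) (Fin n ⊕ Fin m) ℝ :=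
      Matrix.fromBlocks KXX (Real.sqrt η • KXY) (-(Real.sqrt η) • KXYᵀ) (-η • KYY)
    ∀ μ : ℝ, μ ≠ 0 →
      ((∃ v : Fin s → ℝ, v ≠ 0 ∧ Λ *ᵥ v = μ • v) ↔
       (∃ w : Fin n ⊕ Fin m → ℝ, w ≠ 0 ∧ K *ᵥ w = μ • w)) := by
  intro Λ KXX KYY KXY K μ hμ
  set a : ℝ := (Real.sqrt n)⁻¹ with ha
  set b : ℝ := Real.sqrt η * (Real.sqrt m)⁻¹ with hb
  have hn0 : (0:ℝ) ≤ n := Nat.cast_nonneg n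
  have hm0 : (0:ℝ) ≤ m := Nat.cast_nonneg m
  have haa : a * a = (n:ℝ)⁻¹ := by
    rw [ha, ← mul_inv, Real.mul_self_sqrt hn0]
  have hbb : b * b = η / m := by
    rw [hb]
    have h1 : Real.sqrt η * (Real.sqrt m)⁻¹ * (Real.sqrt η * (Real.sqrt m)⁻¹)
        = (Real.sqrt η * Real.sqrt η) * ((Real.sqrt m)⁻¹ * (Real.sqrt m)⁻¹) := by ring
    rw [h1, Real.mul_self_sqrt hη.le, ← mul_inv, Real.mul_self_sqrt hm0, div_eq_mul_inv]
  have hab : a * b = Real.sqrt η * (Real.sqrt ((n:ℝ) * m))⁻¹ := by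
    rw [ha, hb, Real.sqrt_mul hn0, mul_inv]
    ring
  set A : Matrix (Fin n ⊕ Fin m) (Fin s) ℝ :=
    Matrix.fromRows (a • ΦX) ((-b) • ΦY) with hA
  set B : Matrix (Fin s) (Fin n ⊕ Fin m) ℝ :=
    Matrix.fromCols (a • ΦXᵀ) (b • ΦYᵀ) with hB
  have e1 : (a • ΦX) * (a • ΦXᵀ) = (n:ℝ)⁻¹ • (ΦX * ΦXᵀ) := by
    rw [Matrix.smul_mul, Matrix.mul_smul, smul_smul, haa]
  have e2 : (a • ΦX) * (b • ΦYᵀ)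
      = Real.sqrt η • (((Real.sqrt ((n:ℝ) * m))⁻¹) • (ΦX * ΦYᵀ)) := by
    rw [Matrix.smul_mul, Matrix.mul_smul, smul_smul, smul_smul, hab]
  have e3 : ((-b) • ΦY) * (a • ΦXᵀ)
      = (-(Real.sqrt η)) • ((((Real.sqrt ((n:ℝ) * m))⁻¹) • (ΦX * ΦYᵀ))ᵀ) := by
    rw [Matrix.smul_mul, Matrix.mul_smul, smul_smul, Matrix.transpose_smul, smul_smul,
      Matrix.transpose_mul, Matrix.transpose_transpose]
    congr 1
    linear_combination -hab
  have e4 : ((-b) • ΦY) * (b • ΦYᵀ) = (-η) • (((m:ℝ)⁻¹) • (ΦY * ΦYᵀ)) := by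
    rw [Matrix.smul_mul, Matrix.mul_smul, smul_smul, smul_smul]
    congr 1
    linear_combination -hbb
  have hΛ : Λ = B * A := by
    rw [hA, hB, Matrix.fromCols_mul_fromRows]
    have f1 : (a • ΦXᵀ) * (a • ΦX) = (n:ℝ)⁻¹ • (ΦXᵀ * ΦX) := by
      rw [Matrix.smul_mul, Matrix.mul_smul, smul_smul, haa]
    have f2 : (b • ΦYᵀ) * ((-b) • ΦY) = -((η / m) • (ΦYᵀ * ΦY)) := by
      rw [Matrix.smul_mul, Matrix.mul_smul, smul_smul, ← neg_smul]
      congr 1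
      linear_combination -hbb
    rw [f1, f2, ← sub_eq_add_neg]
  have hK : K = A * B := by
    rw [hA, hB, Matrix.fromRows_mul_fromCols, e1, e2, e3, e4]
  constructor
  · intro h
    rw [hK]
    exact eig_transfer A B μ hμ (by rwa [← hΛ])
  · intro h
    rw [hΛ]
    exact eig_transfer B A μ hμ (by rwa [← hK])
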